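/- For a real number q with 0<q<1 and integers n≥1, l≥0 with l≤n, we have ∑_{k=l+1}^n (1+q^k) [k]_q · ([n choose k]_q / [n+k choose k]_q) · q^{k(k-1)} = ([n]_q - [l]_q) · ([n choose l]_q / [n+l choose l]_q) · q^{l^2}. -/

import Mathlib

open Finset

/-- q-analogue of a natural number: [m]_q = (1-q^m)/(1-q). -/
noncomputable def qnum (q : ℝ) (m : ℕ) : ℝ := (1 - q ^ m) / (1 - q)

/-- q-Pochhammer (q;q)_n = ∏_{k=0}^{n-1} (1 - q^{k+1}). -/
noncomputable def qPoch (q : ℝ) (n : ℕ) : ℝ := ∏ k ∈ Finset.range n, (1 - q ^ (k + 1))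

/-- Gaussian q-binomial coefficient, 0 when m > n. -/
noncomputable def qbinom (q : ℝ) (n m : ℕ) : ℝ :=
  if m ≤ n then qPoch q n / (qPoch q m * qPoch q (n - m)) else 0

/-- q-multiple harmonic star sum H_n^*[s₁,…,s_m]. -/
noncomputable def qHstar (q : ℝ) : List ℕ → ℕ → ℝ
  | [], _ => 1
  | s :: rest, n => ∑ k ∈ Finset.Icc 1 n, q ^ k / qnum q k ^ s * qHstar q rest k

/-- q-multiple zeta star value ζ_q^*[s₁,…,s_m]. -/
noncomputable def qZetaStar (q : ℝ) : List ℕ → ℝ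
  | [] => 1
  | s :: rest => ∑' k : ℕ, q ^ (k + 1) / qnum q (k + 1) ^ s * qHstar q rest (k + 1)

/-- strict multiple harmonic sum ∑_{n ≥ k₁ > … > k_r ≥ 1} ∏ 1/k_j^{p_j}. -/
noncomputable def Hstrict : List ℕ → ℕ → ℝ
  | [], _ => 1
  | p :: rest, n => ∑ k ∈ Finset.Icc 1 n, (1 : ℝ) / (k : ℝ) ^ p * Hstrict rest (k - 1)

/-- binomial-weighted strict multiple harmonic sum Ĥ_n(p). -/
noncomputable def Hhat : List ℕ → ℕ → ℝ
  | [], _ => 1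
  | p :: rest, n => ∑ k ∈ Finset.Icc 1 n,
      ((n.choose k : ℝ) / ((n + k).choose n)) * ((1 : ℝ) / (k : ℝ) ^ p) * Hstrict rest (k - 1)

/-- ordinary multiple harmonic star sum H_n^*(s₁,…,s_m). -/
noncomputable def HstarO : List ℕ → ℕ → ℝ
  | [], _ => 1
  | s :: rest, n => ∑ k ∈ Finset.Icc 1 n, (1 : ℝ) / (k : ℝ) ^ s * HstarO rest k

/-- ordinary multiple zeta star value. -/
noncomputable def zetaStarO : List ℕ → ℝ
  | [] => 1
  | s :: rest => ∑' k : ℕ, (1 : ℝ) / ((k : ℝ) + 1) ^ s * HstarO rest (k + 1)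

/-- Merge a list of parts according to a comma(true)/plus(false) pattern. -/
def mergeComp : ℕ → List ℕ → List Bool → List ℕ
  | a, [], _ => [a]
  | a, _ :: _, [] => [a]
  | a, b :: t, true :: bs => a :: mergeComp b t bs
  | a, b :: t, false :: bs => mergeComp (a + b) t bs

lemma one_sub_pow_ne (q : ℝ) (hq0 : 0 < q) (hq1 : q < 1) (m : ℕ) (hm : 1 ≤ m) :
    1 - q ^ m ≠ 0 := by
  have : q ^ m < 1 := pow_lt_one₀ hq0.le hq1 (by omega)
  linarith

lemma qPoch_pos (q : ℝ) (hq0 : 0 < q) (hq1 : q < 1) (n : ℕ) : 0 < qPoch q n := by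
  apply Finset.prod_pos
  intro i _
  have : q ^ (i+1) < 1 := pow_lt_one₀ hq0.le hq1 (by omega)
  linarith

lemma qPoch_succ (q : ℝ) (n : ℕ) : qPoch q (n+1) = qPoch q n * (1 - q ^ (n+1)) := by
  simp [qPoch, Finset.prod_range_succ]

lemma qbinom_ratio (q : ℝ) (hq0 : 0 < q) (hq1 : q < 1) (n k : ℕ) (hk : k ≤ n) :
    qbinom q n k / qbinom q (n + k) k
      = qPoch q n ^ 2 / (qPoch q (n - k) * qPoch q (n + k)) := by
  rw [qbinom, qbinom, if_pos hk, if_pos (by omega), show n + k - k = n by omega]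
  have nz : ∀ j : ℕ, qPoch q j ≠ 0 := fun j => (qPoch_pos q hq0 hq1 j).ne'
  field_simp
  rw [div_eq_div_iff (mul_ne_zero (mul_ne_zero (nz _) (nz _)) (nz _))
      (mul_ne_zero (nz _) (nz _))]
  ring

set_option maxHeartbeats 1000000 in
lemma step (q : ℝ) (hq0 : 0 < q) (hq1 : q < 1) (l m : ℕ) :
    (1 + q ^ (l+1)) * qnum q (l+1) *
      (qbinom q (l+1+m) (l+1) / qbinom q (l+1+m+(l+1)) (l+1)) * q ^ ((l+1)*l)
    + (qnum q (l+1+m) - qnum q (l+1)) *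
      (qbinom q (l+1+m) (l+1) / qbinom q (l+1+m+(l+1)) (l+1)) * q ^ ((l+1)^2)
    = (qnum q (l+1+m) - qnum q l) *
      (qbinom q (l+1+m) l / qbinom q (l+1+m+l) l) * q ^ (l^2) := by
  rw [qbinom_ratio q hq0 hq1 (l+1+m) (l+1) (by omega),
      qbinom_ratio q hq0 hq1 (l+1+m) l (by omega)]
  have e1 : l + 1 + m - (l + 1) = m := by omega
  have e3 : l + 1 + m - l = m + 1 := by omega
  rw [e1, e3]
  have r2 : qPoch q (m+1) = qPoch q m * (1 - q ^ m * q) := by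
    rw [qPoch_succ, pow_succ]
  have r3 : qPoch q (l+1+m+(l+1)) = qPoch q (l+1+m+l) * (1 - q ^ l * q ^ l * q ^ m * q ^ 2) := by
    rw [show l+1+m+(l+1) = (l+1+m+l)+1 by omega, qPoch_succ]
    ring_nf
  rw [r2, r3, qnum, qnum, qnum]
  rw [show (l+1)*l = l^2 + l by ring, show (l+1)^2 = l^2 + l + l + 1 by ring]
  simp only [pow_add]
  have nq : 1 - q ≠ 0 := by linarith
  have nl1 : 1 - q ^ l * q ≠ 0 := by
    have := one_sub_pow_ne q hq0 hq1 (l+1) (by omega); rwa [pow_succ] at this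
  have nm1 : 1 - q ^ m * q ≠ 0 := by
    have := one_sub_pow_ne q hq0 hq1 (m+1) (by omega); rwa [pow_succ] at this
  have nbig : 1 - q ^ l * q ^ l * q ^ m * q ^ 2 ≠ 0 := by
    have := one_sub_pow_ne q hq0 hq1 (l+l+m+2) (by omega)
    rwa [pow_add, pow_add, pow_add] at this
  have nB : qPoch q m ≠ 0 := (qPoch_pos q hq0 hq1 m).ne'
  have nD : qPoch q (l+1+m+l) ≠ 0 := (qPoch_pos q hq0 hq1 _).ne'
  obtain ⟨a, ha⟩ : ∃ x, q ^ l = x := ⟨_, rfl⟩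
  obtain ⟨b, hb⟩ : ∃ x, q ^ m = x := ⟨_, rfl⟩
  obtain ⟨c, hc⟩ : ∃ x, q ^ (l^2) = x := ⟨_, rfl⟩
  obtain ⟨C, hC⟩ : ∃ x, qPoch q (l+1+m) = x := ⟨_, rfl⟩
  obtain ⟨B, hB⟩ : ∃ x, qPoch q m = x := ⟨_, rfl⟩
  obtain ⟨D, hD⟩ : ∃ x, qPoch q (l+1+m+l) = x := ⟨_, rfl⟩
  rw [ha, hb, hc, hC, hB, hD]
  rw [ha] at nl1 nbig
  rw [hb] at nm1 nbig
  rw [hB] at nB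
  rw [hD] at nD
  field_simp
  have h1 : 1 - a ^ 2 * q ^ 2 * b ≠ 0 := by convert nbig using 1; ring
  have h2 : 1 - q * b ≠ 0 := by convert nm1 using 1; ring
  field_simp
  ring

lemma aux_sum (q : ℝ) (hq0 : 0 < q) (hq1 : q < 1) :
    ∀ d l n : ℕ, l + d = n →
    ∑ k ∈ Finset.Icc (l + 1) n,
      (1 + q ^ k) * qnum q k * (qbinom q n k / qbinom q (n + k) k) * q ^ (k * (k - 1))
    = (qnum q n - qnum q l) * (qbinom q n l / qbinom q (n + l) l) * q ^ (l ^ 2) := by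
  intro d
  induction d with
  | zero =>
    intro l n h
    obtain rfl : l = n := by omega
    rw [Finset.Icc_eq_empty (by omega), Finset.sum_empty, sub_self, zero_mul, zero_mul]
  | succ d ih =>
    intro l n h
    obtain rfl : n = l + 1 + d := by omega
    rw [show Finset.Icc (l+1) (l+1+d) = insert (l+1) (Finset.Icc (l+1+1) (l+1+d)) by
          ext x; simp; omega,
        Finset.sum_insert (by simp)]
    rw [ih (l+1) (l+1+d) (by omega)]
    simp only [Nat.add_sub_cancel]
    exact step q hq0 hq1 l d

theorem stmt1 (q : ℝ) (hq0 : 0 < q) (hq1 : q < 1) (n l : ℕ) (hn : 1 ≤ n) (hl : l ≤ n) :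
    ∑ k ∈ Finset.Icc (l + 1) n,
      (1 + q ^ k) * qnum q k * (qbinom q n k / qbinom q (n + k) k) * q ^ (k * (k - 1))
    = (qnum q n - qnum q l) * (qbinom q n l / qbinom q (n + l) l) * q ^ (l ^ 2) :=
  aux_sum q hq0 hq1 (n - l) l n (by omega)
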